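/- There exist probability measures μ, ρ, χ on {0,1}^∞ such that the conditional total variation at time n, a_n(μ,ρ) = Σ_a |μ(x_n=a|x_{<n}) − ρ(x_n=a|x_{<n})|, converges to 0 μ-a.s. (ρ predicts μ in absolute distance), but for ρ' = (1/2)(ρ+χ), a_n(μ,ρ') does not converge to 0 μ-a.s. -/

import Mathlib

open Real Filter
open scoped Topology

noncomputable section

def IsProcess {X : Type} [Fintype X] (μ : (n : ℕ) → (Fin n → X) → ℝ) : Prop :=
  (∀ n w, 0 ≤ μ n w) ∧ (∀ n, ∑ w : Fin n → X, μ n w = 1) ∧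
  (∀ n (w : Fin n → X), μ n w = ∑ a : X, μ (n + 1) (Fin.snoc w a))

/-- Conditional probability of the next symbol `a` given the word `w`. -/
def condP {X : Type} [Fintype X] (ν : (n : ℕ) → (Fin n → X) → ℝ) (n : ℕ)
    (w : Fin n → X) (a : X) : ℝ :=
  ν (n + 1) (Fin.snoc w a) / ν n w

/-- One-step absolute (ℓ1) distance between the conditional next-symbol distributions. -/
def aStep {X : Type} [Fintype X] (μ ρ : (n : ℕ) → (Fin n → X) → ℝ) (n : ℕ)
    (w : Fin n → X) : ℝ :=
  ∑ a : X, |condP μ n w a - condP ρ n w a|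

namespace Contam

def proc (p : ℕ → ℝ) : (n : ℕ) → (Fin n → Bool) → ℝ
  | 0, _ => 1
  | n+1, w => proc p n (Fin.init w) * (if w (Fin.last n) then p n else 1 - p n)

lemma proc_snoc (p : ℕ → ℝ) (n : ℕ) (w : Fin n → Bool) (a : Bool) :
    proc p (n+1) (Fin.snoc w a) = proc p n w * (if a then p n else 1 - p n) := by
  simp [proc, Fin.init_snoc, Fin.snoc_last]

lemma snoc_true (n : ℕ) :
    (Fin.snoc (fun _ : Fin n => true) true : Fin (n+1) → Bool) = fun _ => true := by
  funext i
  refine Fin.lastCases ?_ ?_ i <;> simp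

lemma proc_isProcess (p : ℕ → ℝ) (h0 : ∀ n, 0 ≤ p n) (h1 : ∀ n, p n ≤ 1) :
    IsProcess (proc p) := by
  have hnn : ∀ n w, 0 ≤ proc p n w := by
    intro n
    induction n with
    | zero => intro w; simp [proc]
    | succ n ih =>
        intro w
        show 0 ≤ proc p n (Fin.init w) * _
        apply mul_nonneg (ih _)
        by_cases h : w (Fin.last n) = true <;> simp [h] <;> [exact h0 n; linarith [h1 n]]
  refine ⟨hnn, ?_, ?_⟩
  · intro n
    induction n with
    | zero =>
        rw [Fintype.sum_unique]
        simp [proc]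
    | succ n ih =>
        calc ∑ v : Fin (n+1) → Bool, proc p (n+1) v
            = ∑ x : Bool × (Fin n → Bool),
                proc p (n+1) (Fin.snocEquiv (fun _ => Bool) x) :=
              (Equiv.sum_comp _ _).symm
          _ = ∑ a : Bool, ∑ w : Fin n → Bool,
                proc p (n+1) (Fin.snoc w a) := by
              rw [Fintype.sum_prod_type]
              rfl
          _ = ∑ a : Bool, ∑ w : Fin n → Bool,
                proc p n w * (if a then p n else 1 - p n) := by
              simp only [proc_snoc]
          _ = 1 := by
              simp only [← Finset.sum_mul, ih]
              rw [Fintype.sum_bool]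
              norm_num
  · intro n w
    rw [Fintype.sum_bool, proc_snoc, proc_snoc]
    norm_num
    ring

end Contam

namespace Contam

def c (n : ℕ) : ℝ := (1/4 : ℝ) ^ Nat.log 4 (n+1)

lemma c_pos (n : ℕ) : 0 < c n := pow_pos (by norm_num) _

lemma c_anti {m n : ℕ} (h : m ≤ n) : c n ≤ c m :=
  pow_le_pow_of_le_one (by norm_num) (by norm_num) (Nat.log_mono_right (by omega))

def pmu : ℕ → ℝ := fun _ => 1
def prho : ℕ → ℝ := fun n => ((n:ℝ)+1)/((n:ℝ)+2)
def pchi : ℕ → ℝ := fun n => c (n+1) / c n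

lemma mu_ones (n : ℕ) : proc pmu n (fun _ => true) = 1 := by
  induction n with
  | zero => simp [proc]
  | succ n ih => rw [← snoc_true, proc_snoc, ih]; simp [pmu]

lemma rho_ones (n : ℕ) : proc prho n (fun _ => true) = 1/((n:ℝ)+1) := by
  induction n with
  | zero => simp [proc]
  | succ n ih =>
      rw [← snoc_true, proc_snoc, ih]
      simp only [if_true, prho]
      have h1 : ((n:ℝ)+1) ≠ 0 := by positivity
      have h2 : ((n:ℝ)+2) ≠ 0 := by positivity
      push_cast
      field_simp
      ring

lemma chi_ones (n : ℕ) : proc pchi n (fun _ => true) = c n := by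
  induction n with
  | zero => simp [proc, c]
  | succ n ih =>
      rw [← snoc_true, proc_snoc, ih]
      simp only [if_true, pchi]
      rw [mul_comm, div_mul_cancel₀ _ (c_pos n).ne']

lemma aStep_eq (τ : (n : ℕ) → (Fin n → Bool) → ℝ) (n : ℕ) (T T' : ℝ)
    (hτ : τ n (fun _ => true) = T)
    (ht : τ (n+1) (Fin.snoc (fun _ => true) true) = T')
    (hf : τ (n+1) (Fin.snoc (fun _ => true) false) = T - T')
    (hT : 0 < T) (hT'0 : 0 ≤ T') (hle : T' ≤ T) :
    aStep (proc pmu) τ n (fun _ => true) = 2 * (1 - T' / T) := by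
  have hμt : proc pmu (n+1) (Fin.snoc (fun _ : Fin n => true) true) = 1 := by
    rw [snoc_true]; exact mu_ones (n+1)
  have hμf : proc pmu (n+1) (Fin.snoc (fun _ : Fin n => true) false) = 0 := by
    rw [proc_snoc, mu_ones]; simp [pmu]
  unfold aStep condP
  rw [Fintype.sum_bool, hμt, hμf, ht, hf, hτ, mu_ones]
  have h1 : T' / T ≤ 1 := (div_le_one hT).mpr hle
  have h2 : 0 ≤ (T - T') / T := div_nonneg (by linarith) hT.le
  simp only [div_one]
  rw [abs_of_nonneg (by linarith), abs_of_nonpos (by linarith)]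
  rw [sub_div, div_self hT.ne']
  ring

lemma rho_snoc_true (n : ℕ) :
    proc prho (n+1) (Fin.snoc (fun _ : Fin n => true) true) = 1/((n:ℝ)+2) := by
  rw [snoc_true, rho_ones]; push_cast; ring

lemma rho_snoc_false (n : ℕ) :
    proc prho (n+1) (Fin.snoc (fun _ : Fin n => true) false)
      = 1/((n:ℝ)+1) - 1/((n:ℝ)+2) := by
  rw [proc_snoc, rho_ones]
  simp only [Bool.false_eq_true, if_false, prho]
  have h1 : ((n:ℝ)+1) ≠ 0 := by positivity
  have h2 : ((n:ℝ)+2) ≠ 0 := by positivity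
  field_simp

lemma chi_snoc_true (n : ℕ) :
    proc pchi (n+1) (Fin.snoc (fun _ : Fin n => true) true) = c (n+1) := by
  rw [snoc_true, chi_ones]

lemma chi_snoc_false (n : ℕ) :
    proc pchi (n+1) (Fin.snoc (fun _ : Fin n => true) false) = c n - c (n+1) := by
  rw [proc_snoc, chi_ones]
  simp only [Bool.false_eq_true, if_false, pchi]
  field_simp [(c_pos n).ne']

def s (n : ℕ) : ℝ := 1/((n:ℝ)+1) + c n

lemma s_pos (n : ℕ) : 0 < s n := by
  have h1 : (0:ℝ) < 1/((n:ℝ)+1) := by positivity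
  have h2 := c_pos n
  unfold s; linarith

lemma s_anti (n : ℕ) : s (n+1) ≤ s n := by
  have h1 : 1/((n:ℝ)+1+1) ≤ 1/((n:ℝ)+1) := by
    apply one_div_le_one_div_of_le (by positivity); linarith
  have h2 := c_anti (Nat.le_succ n)
  unfold s; push_cast; linarith

lemma aStep_rho' (n : ℕ) :
    aStep (proc pmu)
      (fun n w => (proc prho n w + proc pchi n w) / 2) n (fun _ => true)
      = 2 * (1 - (s (n+1) / 2) / (s n / 2)) := by
  apply aStep_eq
  · rw [rho_ones, chi_ones]; unfold s; ring
  · rw [rho_snoc_true, chi_snoc_true]; unfold s; push_cast; ring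
  · rw [rho_snoc_false, chi_snoc_false]; unfold s; push_cast; ring
  · have := s_pos n; linarith
  · have := s_pos (n+1); linarith
  · have := s_anti n; linarith

end Contam

namespace Contam

lemma pow4_facts (k : ℕ) : 2 ≤ 4^(k+1) ∧ 4^(k+1) = 4 * 4^k ∧ 1 ≤ 4^k := by
  have h1 : 1 ≤ 4^k := Nat.one_le_pow _ _ (by norm_num)
  have h4 : 4^(k+1) = 4 * 4^k := by rw [pow_succ, Nat.mul_comm]
  exact ⟨by omega, h4, h1⟩

lemma cn_at (k : ℕ) : c (4^(k+1) - 2) = (1/4:ℝ)^k := by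
  obtain ⟨h2, h4, h1⟩ := pow4_facts k
  have e : 4^(k+1) - 2 + 1 = 4^(k+1) - 1 := by omega
  unfold c
  rw [e, show Nat.log 4 (4^(k+1) - 1) = k from
    Nat.log_eq_of_pow_le_of_lt_pow (by omega) (by omega)]

lemma cn1_at (k : ℕ) : c (4^(k+1) - 1) = (1/4:ℝ)^(k+1) := by
  obtain ⟨h2, h4, h1⟩ := pow4_facts k
  have e : 4^(k+1) - 1 + 1 = 4^(k+1) := by omega
  unfold c
  rw [e, Nat.log_pow (by norm_num)]

lemma key_bound (k : ℕ) : (s (4^(k+1) - 2 + 1) / 2) / (s (4^(k+1) - 2) / 2) ≤ 1/2 := by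
  obtain ⟨h2, h4, h1⟩ := pow4_facts k
  set n := 4^(k+1) - 2 with hn
  have e1 : n + 1 = 4^(k+1) - 1 := by omega
  have hN : ((n:ℝ) + 2) = (4:ℝ)^(k+1) := by
    have : (n + 2 : ℕ) = 4^(k+1) := by omega
    calc ((n:ℝ) + 2) = ((n + 2 : ℕ) : ℝ) := by push_cast; ring
      _ = ((4^(k+1) : ℕ) : ℝ) := by rw [this]
      _ = (4:ℝ)^(k+1) := by push_cast; ring
  have hNpos : (0:ℝ) < (4:ℝ)^(k+1) := by positivity
  have hs1 : s (n+1) = 2 / (4:ℝ)^(k+1) := by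
    unfold s
    rw [e1, cn1_at k]
    have e3 : ((4^(k+1) - 1 : ℕ) : ℝ) + 1 = (4:ℝ)^(k+1) := by
      have h5 : (4^(k+1) - 1 : ℕ) + 1 = 4^(k+1) := by omega
      calc ((4^(k+1) - 1 : ℕ) : ℝ) + 1 = (((4^(k+1) - 1) + 1 : ℕ) : ℝ) := by push_cast; ring
        _ = ((4^(k+1) : ℕ) : ℝ) := by rw [h5]
        _ = (4:ℝ)^(k+1) := by push_cast; ring
    rw [e3]
    rw [div_pow, one_pow]
    ring
  have hs0 : 4 / (4:ℝ)^(k+1) ≤ s n := by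
    have hc : c n = (1/4:ℝ)^k := cn_at k
    have hval : (1/4:ℝ)^k = 4 / (4:ℝ)^(k+1) := by
      rw [div_pow, one_pow, pow_succ]
      field_simp
    have hpos : (0:ℝ) < 1/((n:ℝ)+1) := by positivity
    unfold s
    rw [hc, hval]
    linarith
  have hspos := s_pos n
  rw [div_le_div_iff₀ (by linarith) (by norm_num)]
  have hq : s (n+1) / 2 * 2 = s (n+1) := by ring
  rw [hq, hs1]
  rw [div_le_iff₀ hNpos] at hs0 ⊢
  nlinarith [s_pos n]

end Contam


/-- Contamination can destroy prediction in absolute distance: there are measures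
`μ, ρ, χ` on `{0,1}^∞` such that `ρ` predicts `μ` in absolute distance, i.e.
`a_n(μ,ρ|x_{<n}) → 0` `μ`-a.s. (here `μ` is concentrated on a single sequence `x`, so
a.s. means along `x`), but for `ρ' = (ρ + χ)/2`, `a_n(μ,ρ'|x_{<n})` does not converge
to `0` `μ`-a.s. -/
theorem contamination_can_destroy_absolute_distance_prediction :
    ∃ μ ρ χ : (n : ℕ) → (Fin n → Bool) → ℝ,
      IsProcess μ ∧ IsProcess ρ ∧ IsProcess χ ∧
      ∃ x : ℕ → Bool,
        (∀ n : ℕ, μ n (fun i : Fin n => x i) = 1) ∧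
        Tendsto (fun n : ℕ => aStep μ ρ n (fun i : Fin n => x i)) atTop (𝓝 0) ∧
        ¬ Tendsto
            (fun n : ℕ =>
              aStep μ (fun n w => (ρ n w + χ n w) / 2) n (fun i : Fin n => x i))
            atTop (𝓝 0) := by
  refine ⟨Contam.proc Contam.pmu, Contam.proc Contam.prho, Contam.proc Contam.pchi,
    Contam.proc_isProcess _ (fun n => by norm_num [Contam.pmu])
      (fun n => by norm_num [Contam.pmu]),
    Contam.proc_isProcess _ (fun n => by unfold Contam.prho; positivity)
      (fun n => by
        unfold Contam.prho; rw [div_le_one (by positivity)]; linarith),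
    Contam.proc_isProcess _
      (fun n => le_of_lt (div_pos (Contam.c_pos _) (Contam.c_pos _)))
      (fun n => (div_le_one (Contam.c_pos n)).mpr (Contam.c_anti (Nat.le_succ n))),
    fun _ => true, fun n => Contam.mu_ones n, ?_, ?_⟩
  · -- ρ predicts μ
    have he : ∀ n : ℕ, aStep (Contam.proc Contam.pmu) (Contam.proc Contam.prho) n
        (fun _ => true) = 2/((n:ℝ)+2) := by
      intro n
      have h1 : ((n:ℝ)+1) ≠ 0 := by positivity
      have h2 : ((n:ℝ)+2) ≠ 0 := by positivity
      have hle : 1/((n:ℝ)+2) ≤ 1/((n:ℝ)+1) :=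
        one_div_le_one_div_of_le (by positivity) (by linarith)
      rw [Contam.aStep_eq (Contam.proc Contam.prho) n (1/((n:ℝ)+1)) (1/((n:ℝ)+2))
        (Contam.rho_ones n) (Contam.rho_snoc_true n) (Contam.rho_snoc_false n)
        (by positivity) (by positivity) hle]
      field_simp
      ring
    have ht : Tendsto (fun n : ℕ => 2/((n:ℝ)+2)) atTop (𝓝 0) :=
      ((tendsto_const_div_atTop_nhds_zero_nat 2).comp (tendsto_add_atTop_nat 2)).congr
        (fun n => by simp only [Function.comp_apply]; push_cast; ring)
    exact ht.congr (fun n => (he n).symm)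
  · -- contaminated ρ' fails
    intro h
    have h1 := h.eventually (gt_mem_nhds one_pos)
    rw [Filter.eventually_atTop] at h1
    obtain ⟨N, hN⟩ := h1
    have hn : N ≤ 4^(N+1) - 2 := by
      have := Nat.lt_pow_self (n := N+1) (show 1 < 4 by norm_num)
      omega
    have hlt := hN (4^(N+1) - 2) hn
    have hge : (1:ℝ) ≤ aStep (Contam.proc Contam.pmu)
        (fun n w => (Contam.proc Contam.prho n w + Contam.proc Contam.pchi n w) / 2)
        (4^(N+1) - 2) (fun _ => true) := by
      rw [Contam.aStep_rho' (4^(N+1) - 2)]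
      have := Contam.key_bound N
      linarith
    exact absurd hlt (by simpa using not_lt.mpr hge)
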